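/- (EM as degenerate mean field.) Fix i ∈ I, fix probability mass functions b_j on S_j for all j ∈ I\{i}, and suppose all factors f_a are positive. For x̄ ∈ S_i let δ_{x̄} denote the point mass at x̄, and define m_{a→i}(x_i) := exp( ∑_{x_a\x_i} (∏_{j∈N(a)\i} b_j(x_j)) ln f_a(x_a) ) for a ∈ N(i). Then, with the convention 0·ln 0 = 0, F_MF evaluated with b_i = δ_{x̄} equals C − ln( ∏_{a∈N(i)} m_{a→i}(x̄) ), where C := ∑_{j∈I\{i}} ∑_{x_j} b_j(x_j) ln b_j(x_j) − ∑_{a∈A, i∉N(a)} ∑_{x_a} (∏_{j∈N(a)} b_j(x_j)) ln f_a(x_a) does not depend on x̄; consequently x̄ minimizes x̄ ↦ F_MF(b with b_i = δ_{x̄}) if and only if x̄ maximizes x̄ ↦ ∏_{a∈N(i)} m_{a→i}(x̄). Here F_MF := ∑_{j∈I} ∑_{x_j} b_j(x_j) ln b_j(x_j) − ∑_{a∈A} ∑_{x_a} (∏_{j∈N(a)} b_j(x_j)) ln f_a(x_a). -/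

import Mathlib

open Finset

abbrev Cfg {ι : Type} (S : ι → Type) (t : Finset ι) : Type :=
  ∀ j : {x // x ∈ t}, S j.1

theorem statement18
    {ι α : Type} [Fintype ι] [Fintype α] [DecidableEq ι] [DecidableEq α]
    (S : ι → Type) [∀ i, Fintype (S i)] [∀ i, Nonempty (S i)] [∀ i, DecidableEq (S i)]
    (N : α → Finset ι)
    (f : ∀ a : α, Cfg S (N a) → ℝ) (hf : ∀ a xa, 0 < f a xa)
    (i : ι) (b : ∀ j : ι, S j → ℝ)
    (hb0 : ∀ j : ι, j ≠ i → ∀ xj, 0 ≤ b j xj)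
    (hb1 : ∀ j : ι, j ≠ i → ∑ xj : S j, b j xj = 1)
    (m : α → S i → ℝ)
    (hm : ∀ a : α, ∀ h : i ∈ N a, ∀ xi : S i,
      m a xi = Real.exp (∑ xa : Cfg S (N a),
        (if xa ⟨i, h⟩ = xi then
          (∏ j ∈ univ.filter (fun j : {x // x ∈ N a} => j.1 ≠ i), b j.1 (xa j)) *
            Real.log (f a xa)
        else 0)))
    (Fδ : S i → ℝ)
    (hFδ : ∀ xbar : S i,
      Fδ xbar =
        (∑ j : ι, ∑ xj : S j,
          (Function.update b i (fun xi => if xi = xbar then (1 : ℝ) else 0)) j xj *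
            Real.log
              ((Function.update b i (fun xi => if xi = xbar then (1 : ℝ) else 0)) j xj))
        - ∑ a : α, ∑ xa : Cfg S (N a),
            (∏ j : {x // x ∈ N a},
              (Function.update b i (fun xi => if xi = xbar then (1 : ℝ) else 0)) j.1 (xa j)) *
              Real.log (f a xa))
    (C : ℝ)
    (hC : C =
      (∑ j ∈ univ.erase i, ∑ xj : S j, b j xj * Real.log (b j xj))
      - ∑ a ∈ univ.filter (fun c : α => i ∉ N c),
          ∑ xa : Cfg S (N a),
            (∏ j : {x // x ∈ N a}, b j.1 (xa j)) * Real.log (f a xa)) :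
    (∀ xbar : S i,
      Fδ xbar = C - Real.log (∏ a ∈ univ.filter (fun c : α => i ∈ N c), m a xbar)) ∧
    (∀ xbar : S i,
      (∀ x' : S i, Fδ xbar ≤ Fδ x') ↔
        (∀ x' : S i,
          (∏ a ∈ univ.filter (fun c : α => i ∈ N c), m a x') ≤
            ∏ a ∈ univ.filter (fun c : α => i ∈ N c), m a xbar)) := by
  have hmpos : ∀ (xb : S i) (a : α), i ∈ N a → 0 < m a xb := by
    intro xb a h
    rw [hm a h]; exact Real.exp_pos _
  have hPpos : ∀ xb : S i, 0 < ∏ a ∈ univ.filter (fun c : α => i ∈ N c), m a xb := by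
    intro xb
    exact Finset.prod_pos (fun a ha => hmpos xb a (Finset.mem_filter.mp ha).2)
  have key : ∀ xbar : S i,
      Fδ xbar = C - Real.log (∏ a ∈ univ.filter (fun c : α => i ∈ N c), m a xbar) := by
    intro xbar
    set δ : S i → ℝ := fun xi => if xi = xbar then (1:ℝ) else 0 with hδ
    set u : ∀ j : ι, S j → ℝ := Function.update b i δ with hu
    have hent : ∑ j : ι, ∑ xj : S j, u j xj * Real.log (u j xj)
        = ∑ j ∈ univ.erase i, ∑ xj : S j, b j xj * Real.log (b j xj) := by
      rw [← Finset.add_sum_erase univ _ (mem_univ i)]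
      have h1 : ∑ xj : S i, u i xj * Real.log (u i xj) = 0 := by
        apply Finset.sum_eq_zero
        intro xj _
        simp only [hu, Function.update_self, hδ]
        split_ifs <;> simp
      rw [h1, zero_add]
      refine Finset.sum_congr rfl fun j hj => ?_
      have hji : j ≠ i := (Finset.mem_erase.mp hj).1
      simp [hu, Function.update_of_ne hji]
    have hen : ∑ a : α, ∑ xa : Cfg S (N a),
          (∏ j : {x // x ∈ N a}, u j.1 (xa j)) * Real.log (f a xa)
        = (∑ a ∈ univ.filter (fun c : α => i ∈ N c), Real.log (m a xbar))
          + ∑ a ∈ univ.filter (fun c : α => i ∉ N c), ∑ xa : Cfg S (N a),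
              (∏ j : {x // x ∈ N a}, b j.1 (xa j)) * Real.log (f a xa) := by
      rw [← Finset.sum_filter_add_sum_filter_not univ (fun c : α => i ∈ N c)]
      congr 1
      · refine Finset.sum_congr rfl fun a ha => ?_
        have h : i ∈ N a := (Finset.mem_filter.mp ha).2
        rw [hm a h, Real.log_exp]
        refine Finset.sum_congr rfl fun xa _ => ?_
        have hfe : univ.filter (fun j : {x // x ∈ N a} => j.1 ≠ i)
            = univ.erase (⟨i, h⟩ : {x // x ∈ N a}) := by
          ext j
          simp [Finset.mem_erase, Subtype.ext_iff]
        have hp : (∏ j : {x // x ∈ N a}, u j.1 (xa j))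
            = (if xa ⟨i, h⟩ = xbar then (1:ℝ) else 0) *
              ∏ j ∈ univ.filter (fun j : {x // x ∈ N a} => j.1 ≠ i), b j.1 (xa j) := by
          rw [← Finset.mul_prod_erase univ (fun j : {x // x ∈ N a} => u j.1 (xa j))
            (mem_univ (⟨i, h⟩ : {x // x ∈ N a})), hfe]
          congr 1
          · simp [hu, Function.update_self, hδ]
          · refine Finset.prod_congr rfl fun j hj => ?_
            have : j.1 ≠ i := by
              intro hji
              exact (Finset.mem_erase.mp hj).1 (Subtype.ext hji)
            simp [hu, Function.update_of_ne this]
        rw [hp]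
        split_ifs with h' <;> ring
      · refine Finset.sum_congr rfl fun a ha => ?_
        have h : i ∉ N a := by
          have := (Finset.mem_filter.mp ha).2
          simpa using this
        refine Finset.sum_congr rfl fun xa _ => ?_
        congr 1
        refine Finset.prod_congr rfl fun j _ => ?_
        have : j.1 ≠ i := fun hji => h (hji ▸ j.2)
        simp [hu, Function.update_of_ne this]
    have hlog : Real.log (∏ a ∈ univ.filter (fun c : α => i ∈ N c), m a xbar)
        = ∑ a ∈ univ.filter (fun c : α => i ∈ N c), Real.log (m a xbar) := by
      refine Real.log_prod fun a ha => ?_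
      exact ne_of_gt (hmpos xbar a (Finset.mem_filter.mp ha).2)
    rw [hFδ xbar, hC, hlog]
    rw [show (fun xi => if xi = xbar then (1:ℝ) else 0) = δ from rfl]
    rw [show Function.update b i δ = u from rfl] at *
    rw [hent, hen]
    ring
  refine ⟨key, fun xbar => ?_⟩
  constructor
  · intro hmin x'
    have := hmin x'
    rw [key xbar, key x'] at this
    have hlog : Real.log (∏ a ∈ univ.filter (fun c : α => i ∈ N c), m a x')
        ≤ Real.log (∏ a ∈ univ.filter (fun c : α => i ∈ N c), m a xbar) := by linarith
    exact (Real.log_le_log_iff (hPpos x') (hPpos xbar)).mp hlog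
  · intro hmax x'
    have := hmax x'
    rw [key xbar, key x']
    have hlog := Real.log_le_log_iff (hPpos x') (hPpos xbar) |>.mpr this
    linarith
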